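/- Let A be an open subset of (a,b). For every pair (u,γ) with u ∈ BV(a,b), γ = D^s u + g·L¹ for some g ∈ L^1(a,b), and u′ − g ∈ L^2(a,b), the localized Γ-lower limit satisfies E′(u,γ,A) ≥ 2 Σ_{x ∈ J_u ∩ A} f(|[u](x)|/2). -/

import Mathlib

open MeasureTheory Filter Set Topology
open scoped ENNReal NNReal

noncomputable section

/-- Integral of a real function against a finite signed (Radon) measure. -/
def sInt (μ : MeasureTheory.SignedMeasure ℝ) (φ : ℝ → ℝ) : ℝ :=
  (∫ x, φ x ∂μ.toJordanDecomposition.posPart) -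
    ∫ x, φ x ∂μ.toJordanDecomposition.negPart

/-- The cohesive energy density `f(t) = c₀ t` for `t < 1` and `f(t) = c₀` for `t ≥ 1`. -/
def fcut (c₀ t : ℝ) : ℝ := if t < 1 then c₀ * t else c₀

/-- The flat norm of a signed measure relative to the open set `A`:
the supremum of integrals against `W^{1,∞}_0(A)` test functions of norm at most one. -/
def flatNormOn (A : Set ℝ) (μ : SignedMeasure ℝ) : ℝ :=
  sSup { r | ∃ φ : ℝ → ℝ, LipschitzWith 1 φ ∧ (∀ x, |φ x| ≤ 1) ∧
    (∀ x ∉ A, φ x = 0) ∧ r = sInt μ φ }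

/-- The flat norm on the interval `(a,b)`. -/
def flatNorm (a b : ℝ) (μ : SignedMeasure ℝ) : ℝ := flatNormOn (Set.Ioo a b) μ

/-- The `W^{-1,q}` norm on the open set `A`, where `p = q'` is the conjugate exponent:
the supremum of integrals against (smooth) `W^{1,p}_0(A)` test functions of norm ≤ 1. -/
def negSobNormOn (A : Set ℝ) (p : ℝ≥0∞) (μ : SignedMeasure ℝ) : ℝ :=
  sSup { r | ∃ φ : ℝ → ℝ, ContDiff ℝ 1 φ ∧ (∀ x ∉ A, φ x = 0) ∧
    eLpNorm φ p (volume.restrict A) + eLpNorm (deriv φ) p (volume.restrict A) ≤ 1 ∧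
    r = sInt μ φ }

/-- `u ∈ W^{1,1}(a,b)` with (weak) derivative `u'`: `u` is absolutely continuous on
`(a,b)` with integrable derivative `u'`. -/
def IsW11 (a b : ℝ) (u u' : ℝ → ℝ) : Prop :=
  IntegrableOn u (Set.Ioo a b) ∧ IntegrableOn u' (Set.Ioo a b) ∧
    ∀ x ∈ Set.Ioo a b, ∀ y ∈ Set.Ioo a b, x ≤ y → u y - u x = ∫ t in x..y, u' t

/-- `‖u‖_{L^∞(a,b)} ≤ K`. -/
def LinftyLE (a b K : ℝ) (u : ℝ → ℝ) : Prop :=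
  ∀ᵐ x ∂(volume.restrict (Set.Ioo a b)), |u x| ≤ K

/-- `Du` is the distributional derivative (a finite signed measure concentrated on `A`)
of `u` on the open set `A`; this encodes `u ∈ BV(A)` with derivative measure `Du`. -/
def HasDerivMeasureOn (A : Set ℝ) (u : ℝ → ℝ) (Du : SignedMeasure ℝ) : Prop :=
  Du = Du.restrict A ∧
    ∀ φ : ℝ → ℝ, ContDiff ℝ 1 φ → HasCompactSupport φ → tsupport φ ⊆ A →
      ∫ x in A, u x * deriv φ x = - sInt Du φ

/-- Right limit `u(x+)`. -/
def rlim (u : ℝ → ℝ) (x : ℝ) : ℝ := limUnder (𝓝[>] x) u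
/-- Left limit `u(x−)`. -/
def llim (u : ℝ → ℝ) (x : ℝ) : ℝ := limUnder (𝓝[<] x) u

/-- The jump set `J_u` of `u` in `(a,b)`. -/
def jumpSet (a b : ℝ) (u : ℝ → ℝ) : Set ℝ :=
  {x | x ∈ Set.Ioo a b ∧ (∃ l, Tendsto u (𝓝[<] x) (𝓝 l)) ∧
    (∃ r, Tendsto u (𝓝[>] x) (𝓝 r)) ∧ rlim u x ≠ llim u x}

/-- The jump `[u](x) = u(x+) − u(x−)`. -/
def jump (u : ℝ → ℝ) (x : ℝ) : ℝ := rlim u x - llim u x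

/-- The Cantor part `D^c u` of the derivative measure `Du`. -/
def cantorPart (a b : ℝ) (u : ℝ → ℝ) (Du : SignedMeasure ℝ) : SignedMeasure ℝ :=
  (Du.singularPart volume).restrict (jumpSet a b u)ᶜ

/-- The average `⨍_{I_ε(x) ∩ (a,b)} |g| dt`. -/
def avgAbs (a b ε : ℝ) (g : ℝ → ℝ) (x : ℝ) : ℝ :=
  ⨍ t in Set.Ioo (x - ε) (x + ε) ∩ Set.Ioo a b, |g t|

/-- The value of the approximating energies, localized to the set `A`. -/
def EpsCoreOn (a b c₀ ε : ℝ) (A : Set ℝ) (u' g : ℝ → ℝ) : ℝ :=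
  (∫ x in A, (u' x - g x) ^ 2) + (1 / ε) * ∫ x in A, fcut c₀ (ε * avgAbs a b ε g x)

/-- The approximating (localized) energy `E_ε(u,γ,A)` for `K < ∞`: it is `∞` unless
`u ∈ W^{1,1}(a,b)`, `‖u‖_∞ ≤ K`, `γ = g·L¹` with `g ∈ L¹(a,b)` and `u' - g ∈ L²(a,b)`.
(The infimum runs over all the possible representations; they all yield the same value.) -/
def EepsLoc (a b c₀ K ε : ℝ) (A : Set ℝ) (u : ℝ → ℝ) (γ : SignedMeasure ℝ) : ℝ≥0∞ :=
  ⨅ (u' : ℝ → ℝ) (g : ℝ → ℝ) (_ : IsW11 a b u u') (_ : LinftyLE a b K u)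
    (_ : IntegrableOn g (Set.Ioo a b))
    (_ : γ = (volume.restrict (Set.Ioo a b)).withDensityᵥ g)
    (_ : MemLp (fun x => u' x - g x) 2 (volume.restrict (Set.Ioo a b))),
    ENNReal.ofReal (EpsCoreOn a b c₀ ε A u' g)

/-- The approximating energy `E_ε(u,γ)` for `K < ∞`. -/
def Eeps (a b c₀ K ε : ℝ) (u : ℝ → ℝ) (γ : SignedMeasure ℝ) : ℝ≥0∞ :=
  EepsLoc a b c₀ K ε (Set.Ioo a b) u γ

/-- The value of the limiting energy `E` for `u ∈ BV(a,b)` with derivative measure `Du`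
and inelastic density `g`:
`∫ |u'-g|² + c₀ ∫ |g| + 2 Σ_{x ∈ J_u} f(|[u](x)|/2) + c₀ |D^c u|(a,b)`. -/
def ElimVal (a b c₀ : ℝ) (u : ℝ → ℝ) (Du : SignedMeasure ℝ) (g : ℝ → ℝ) : ℝ≥0∞ :=
  ENNReal.ofReal (∫ x in Set.Ioo a b, (Du.rnDeriv volume x - g x) ^ 2)
    + ENNReal.ofReal (c₀ * ∫ x in Set.Ioo a b, |g x|)
    + 2 * ∑' p : (jumpSet a b u), ENNReal.ofReal (fcut c₀ (|jump u ↑p| / 2))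
    + ENNReal.ofReal c₀ *
        MeasureTheory.SignedMeasure.totalVariation (cantorPart a b u Du) (Set.Ioo a b)

/-- The limiting energy `E(u,γ)` for `K < ∞`: it is `∞` unless `u ∈ BV(a,b)`,
`‖u‖_∞ ≤ K`, `γ = D^s u + g·L¹` with `g ∈ L¹(a,b)` and `u' - g ∈ L²(a,b)`. -/
def Elim (a b c₀ K : ℝ) (u : ℝ → ℝ) (γ : SignedMeasure ℝ) : ℝ≥0∞ :=
  ⨅ (Du : SignedMeasure ℝ) (g : ℝ → ℝ)
    (_ : IntegrableOn u (Set.Ioo a b)) (_ : HasDerivMeasureOn (Set.Ioo a b) u Du)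
    (_ : LinftyLE a b K u) (_ : IntegrableOn g (Set.Ioo a b))
    (_ : γ = Du.singularPart volume + (volume.restrict (Set.Ioo a b)).withDensityᵥ g)
    (_ : MemLp (fun x => Du.rnDeriv volume x - g x) 2 (volume.restrict (Set.Ioo a b))),
    ElimVal a b c₀ u Du g

/-- Convergence `u_ε → u` in `L¹(a,b)` as `ε → 0⁺`. -/
def TendstoL1 (a b : ℝ) (uε : ℝ → ℝ → ℝ) (u : ℝ → ℝ) : Prop :=
  Tendsto (fun ε => ∫ x in Set.Ioo a b, |uε ε x - u x|) (𝓝[>] (0:ℝ)) (𝓝 0)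

/-- Convergence `γ_ε → γ` in the flat norm as `ε → 0⁺`. -/
def TendstoFlat (a b : ℝ) (γε : ℝ → SignedMeasure ℝ) (γ : SignedMeasure ℝ) : Prop :=
  Tendsto (fun ε => flatNorm a b (γε ε - γ)) (𝓝[>] (0:ℝ)) (𝓝 0)

/-- The localized Γ-lower limit `E'(u,γ,A)`. -/
def GammaLowerLoc (a b c₀ K : ℝ) (A : Set ℝ) (u : ℝ → ℝ) (γ : SignedMeasure ℝ) : ℝ≥0∞ :=
  ⨅ (uε : ℝ → ℝ → ℝ) (γε : ℝ → SignedMeasure ℝ)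
    (_ : TendstoL1 a b uε u) (_ : TendstoFlat a b γε γ),
    liminf (fun ε => EepsLoc a b c₀ K ε A (uε ε) (γε ε)) (𝓝[>] (0:ℝ))

/-- The Γ-upper limit `E''(u,γ)`. -/
def GammaUpper (a b c₀ K : ℝ) (u : ℝ → ℝ) (γ : SignedMeasure ℝ) : ℝ≥0∞ :=
  ⨅ (uε : ℝ → ℝ → ℝ) (γε : ℝ → SignedMeasure ℝ)
    (_ : TendstoL1 a b uε u) (_ : TendstoFlat a b γε γ),
    limsup (fun ε => Eeps a b c₀ K ε (uε ε) (γε ε)) (𝓝[>] (0:ℝ))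

/-! ### The unrestricted case `K = ∞` (extended-real valued displacements) -/

/-- The finiteness set `F(u)` of `u : (a,b) → ℝ̄`. -/
def finSet (a b : ℝ) (u : ℝ → EReal) : Set ℝ :=
  interior {x | x ∈ Set.Ioo a b ∧ u x ≠ ⊤ ∧ u x ≠ ⊥}

/-- Right limit `u(x+)` in `ℝ̄`. -/
def erlim (u : ℝ → EReal) (x : ℝ) : EReal := limUnder (𝓝[>] x) u
/-- Left limit `u(x−)` in `ℝ̄`. -/
def ellim (u : ℝ → EReal) (x : ℝ) : EReal := limUnder (𝓝[<] x) u

/-- The jump set of `u : (a,b) → ℝ̄`. -/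
def jumpSetE (a b : ℝ) (u : ℝ → EReal) : Set ℝ :=
  {x | x ∈ Set.Ioo a b ∧ (∃ l, Tendsto u (𝓝[<] x) (𝓝 l)) ∧
    (∃ r, Tendsto u (𝓝[>] x) (𝓝 r)) ∧ erlim u x ≠ ellim u x}

/-- `f(|r − l|/2)` for one-sided limits `l, r ∈ ℝ̄`, with the convention `f(∞) = c₀`. -/
def fjumpE (c₀ : ℝ) (l r : EReal) : ℝ :=
  if l = ⊤ ∨ l = ⊥ ∨ r = ⊤ ∨ r = ⊥ then c₀ else fcut c₀ (|r.toReal - l.toReal| / 2)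

/-- `u ∈ BV_{∞,P}(a,b)` with representation data `u = w + Σᵢ αᵢ χ_{(x_{i-1}, x_i)}`. -/
def IsBVinftyRep (a b : ℝ) (u : ℝ → EReal) (m : ℕ) (x : Fin (m + 1) → ℝ)
    (α : Fin m → EReal) (w : ℝ → ℝ) : Prop :=
  StrictMono x ∧ x 0 = a ∧ x (Fin.last m) = b ∧
    (∀ i, α i = ⊥ ∨ α i = 0 ∨ α i = ⊤) ∧
    IntegrableOn w (Set.Ioo a b) ∧ (∃ Dw, HasDerivMeasureOn (Set.Ioo a b) w Dw) ∧
    ∀ t ∈ Set.Ioo a b,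
      u t = (w t : EReal) +
        ∑ i : Fin m, (if t ∈ Set.Ioo (x i.castSucc) (x i.succ) then α i else 0)

/-- The value of the extended limiting energy for `u ∈ BV_{∞,P}(a,b)` with `BV` part `w`
(whose derivative measure is `Dw`) and inelastic density `g`. -/
def ElimInfVal (a b c₀ : ℝ) (u : ℝ → EReal) (Dw : SignedMeasure ℝ) (g : ℝ → ℝ) : ℝ≥0∞ :=
  ENNReal.ofReal (∫ t in finSet a b u, (Dw.rnDeriv volume t - g t) ^ 2)
    + ENNReal.ofReal (c₀ * ∫ t in finSet a b u, |g t|)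
    + 2 * ∑' p : (jumpSetE a b u), ENNReal.ofReal (fjumpE c₀ (ellim u ↑p) (erlim u ↑p))
    + ENNReal.ofReal c₀ *
        MeasureTheory.SignedMeasure.totalVariation
          ((Dw.singularPart volume).restrict (jumpSetE a b u)ᶜ) (finSet a b u)

/-- The extended limiting energy `E(u,γ)` for `K = ∞`: it is `∞` unless
`u ∈ BV_{∞,P}(a,b)`, `g ∈ L¹(F(u))`, `γ⌊F(u) = (D^s u + g·L¹)⌊F(u)` and
`u' − g ∈ L²(F(u))`. -/
def ElimInf (a b c₀ : ℝ) (u : ℝ → EReal) (γ : SignedMeasure ℝ) : ℝ≥0∞ :=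
  ⨅ (m : ℕ) (x : Fin (m + 1) → ℝ) (α : Fin m → EReal) (w : ℝ → ℝ)
    (Dw : SignedMeasure ℝ) (g : ℝ → ℝ)
    (_ : IsBVinftyRep a b u m x α w)
    (_ : HasDerivMeasureOn (Set.Ioo a b) w Dw)
    (_ : IntegrableOn g (finSet a b u))
    (_ : γ.restrict (finSet a b u) =
      (Dw.singularPart volume + (volume.restrict (finSet a b u)).withDensityᵥ g).restrict
        (finSet a b u))
    (_ : MemLp (fun t => Dw.rnDeriv volume t - g t) 2 (volume.restrict (finSet a b u))),
    ElimInfVal a b c₀ u Dw g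

/-- The approximating energy `E_ε(u,γ)` for `K = ∞`, acting on `u : (a,b) → ℝ̄`. -/
def EepsInf (a b c₀ ε : ℝ) (u : ℝ → EReal) (γ : SignedMeasure ℝ) : ℝ≥0∞ :=
  ⨅ (v : ℝ → ℝ) (u' : ℝ → ℝ) (g : ℝ → ℝ) (_ : ∀ t ∈ Set.Ioo a b, u t = (v t : EReal))
    (_ : IsW11 a b v u') (_ : IntegrableOn g (Set.Ioo a b))
    (_ : γ = (volume.restrict (Set.Ioo a b)).withDensityᵥ g)
    (_ : MemLp (fun t => u' t - g t) 2 (volume.restrict (Set.Ioo a b))),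
    ENNReal.ofReal (EpsCoreOn a b c₀ ε (Set.Ioo a b) u' g)

/-- Convergence `(u_ε, γ_ε) → (u, γ)` in `L⁰((a,b), ℝ̄) × M(a,b)`:
`u_ε → u` a.e. and `γ_ε⌊A → γ⌊A` in the flat norm for every open `A ⋐ F(u) ∖ S`,
for some finite set `S ⊆ (a,b)` of partition points. -/
def TendstoL0 (a b : ℝ) (uε : ℝ → ℝ → EReal) (γε : ℝ → SignedMeasure ℝ)
    (u : ℝ → EReal) (γ : SignedMeasure ℝ) : Prop :=
  (∀ᵐ t ∂(volume.restrict (Set.Ioo a b)),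
      Tendsto (fun ε => uε ε t) (𝓝[>] (0:ℝ)) (𝓝 (u t))) ∧
    ∃ S : Finset ℝ, ↑S ⊆ Set.Ioo a b ∧
      ∀ A : Set ℝ, IsOpen A → IsCompact (closure A) → closure A ⊆ finSet a b u \ ↑S →
        Tendsto (fun ε => flatNormOn A (((γε ε) - γ).restrict A)) (𝓝[>] (0:ℝ)) (𝓝 0)

/-- The minimal approximating energy `Ẽ_ε(u)` (for `K < ∞`). -/
def EepsMin (a b c₀ K ε : ℝ) (u : ℝ → ℝ) : ℝ≥0∞ :=
  ⨅ γ : SignedMeasure ℝ, Eeps a b c₀ K ε u γ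

/-- The minimal limiting energy `Ẽ(u)` (for `K < ∞`). -/
def ElimMin (a b c₀ K : ℝ) (u : ℝ → ℝ) : ℝ≥0∞ :=
  ⨅ γ : SignedMeasure ℝ, Elim a b c₀ K u γ

/-- The minimal approximating energy `Ẽ_ε(u)` for `K = ∞`. -/
def EepsInfMin (a b c₀ ε : ℝ) (u : ℝ → EReal) : ℝ≥0∞ :=
  ⨅ γ : SignedMeasure ℝ, EepsInf a b c₀ ε u γ

/-- The minimal limiting energy `Ẽ(u)` for `K = ∞`. -/
def ElimInfMin (a b c₀ : ℝ) (u : ℝ → EReal) : ℝ≥0∞ :=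
  ⨅ γ : SignedMeasure ℝ, ElimInf a b c₀ u γ

/-- The soft-thresholding function `g*` associated with `h` and `c₀`. -/
def softThresh (c₀ : ℝ) (h : ℝ → ℝ) : ℝ → ℝ := fun x =>
  if c₀ / 2 < |h x| then h x - Real.sign (h x) * (c₀ / 2) else 0

open Classical in
/-- The functional `g ↦ ∫ |h−g|² + c₀ ∫ |g|` on `(a,b)`, with value `∞` if `h − g ∉ L²`. -/
def softJ (a b c₀ : ℝ) (h g : ℝ → ℝ) : ℝ≥0∞ :=
  if MemLp (fun x => h x - g x) 2 (volume.restrict (Set.Ioo a b)) then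
    ENNReal.ofReal (∫ x in Set.Ioo a b, (h x - g x) ^ 2)
      + ENNReal.ofReal (c₀ * ∫ x in Set.Ioo a b, |g x|)
  else ⊤


/-! ### Auxiliary lemmas -/

lemma fcut_eq (c₀ t : ℝ) : fcut c₀ t = c₀ * min t 1 := by
  unfold fcut
  split_ifs with h
  · rw [min_eq_left h.le]
  · rw [min_eq_right (not_lt.1 h), mul_one]

lemma fcut_nonneg {c₀ t : ℝ} (hc : 0 ≤ c₀) (ht : 0 ≤ t) : 0 ≤ fcut c₀ t := by
  rw [fcut_eq]; exact mul_nonneg hc (le_min ht one_pos.le)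

lemma fcut_mono {c₀ : ℝ} (hc : 0 ≤ c₀) : Monotone (fcut c₀) := by
  intro s t hst
  simp only [fcut_eq]
  exact mul_le_mul_of_nonneg_left (min_le_min hst le_rfl) hc

lemma fcut_lip {c₀ s d : ℝ} (hc : 0 ≤ c₀) (hd : 0 ≤ d) : fcut c₀ s - c₀ * d ≤ fcut c₀ (s - d) := by
  simp only [fcut_eq]
  have : min s 1 - d ≤ min (s - d) 1 := by
    rcases min_cases s 1 with ⟨h1, h2⟩ | ⟨h1, h2⟩ <;> rcases min_cases (s - d) 1 with ⟨h3, h4⟩ | ⟨h3, h4⟩ <;>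
      simp_all <;> linarith
  nlinarith [this]

lemma exists_pos_forall_le {α : Type*} (T : Finset α) (f : α → ℝ)
    (h : ∀ x ∈ T, 0 < f x) : ∃ r : ℝ, 0 < r ∧ ∀ x ∈ T, r ≤ f x := by
  classical
  induction T using Finset.induction_on with
  | empty => exact ⟨1, one_pos, by simp⟩
  | insert x T' hx ih =>
    obtain ⟨r, hr, hr'⟩ := ih (fun y hy => h y (Finset.mem_insert_of_mem hy))
    refine ⟨min r (f x), lt_min hr (h x (Finset.mem_insert_self x T')), ?_⟩
    intro y hy
    rcases Finset.mem_insert.1 hy with rfl | hy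
    · exact min_le_right _ _
    · exact (min_le_left _ _).trans (hr' y hy)

lemma le_of_le_add_mul {x y C : ℝ} (hC : 0 ≤ C)
    (h : ∀ δ : ℝ, 0 < δ → δ ≤ 1 → x ≤ y + C * δ) : x ≤ y := by
  by_contra hxy
  push_neg at hxy
  have hd : 0 < (x - y) / (2 * (C + 1)) := div_pos (by linarith) (by linarith)
  set δ := min 1 ((x - y) / (2 * (C + 1))) with hδ
  have hδpos : 0 < δ := lt_min one_pos hd
  have h1 := h δ hδpos (min_le_left _ _)
  have h2 : δ ≤ (x - y) / (2 * (C + 1)) := min_le_right _ _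
  have : C * δ ≤ (C + 1) * ((x - y) / (2 * (C + 1))) := by
    apply mul_le_mul (by linarith) h2 hδpos.le (by linarith)
  have h3 : (C + 1) * ((x - y) / (2 * (C + 1))) = (x - y) / 2 := by
    field_simp
  rw [h3] at this
  linarith

lemma cs_lemma {s : Set ℝ} (hvol : volume s ≠ ⊤) {F : ℝ → ℝ}
    (hF : MemLp F 2 (volume.restrict s)) :
    (∫ x in s, |F x|) ^ 2 ≤ (volume s).toReal * ∫ x in s, F x ^ 2 := by
  haveI : IsFiniteMeasure (volume.restrict s) := by
    constructor
    rw [Measure.restrict_apply_univ]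
    exact hvol.lt_top
  have hconj : (2 : ℝ).HolderConjugate 2 := by
    constructor <;> norm_num
  have habs : MemLp (fun x => |F x|) 2 (volume.restrict s) := by
    simpa using hF.norm
  have hone : MemLp (fun _ : ℝ => (1 : ℝ)) 2 (volume.restrict s) := memLp_const 1
  have h := integral_mul_le_Lp_mul_Lq_of_nonneg (μ := volume.restrict s) hconj
    (f := fun x => |F x|) (g := fun _ => 1)
    (Filter.Eventually.of_forall fun x => abs_nonneg _)
    (Filter.Eventually.of_forall fun _ => one_pos.le)
    (by simpa using habs) (by simpa using hone)
  simp only [mul_one] at h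
  have hF2 : ∫ x in s, |F x| ^ (2 : ℝ) = ∫ x in s, F x ^ 2 := by
    apply integral_congr_ae
    filter_upwards with x
    rw [show |F x| ^ (2 : ℝ) = |F x| ^ (2 : ℕ) by
      rw [← Real.rpow_natCast |F x| 2]; norm_num]
    rw [sq_abs]
  have hone2 : ∫ _x in s, (1 : ℝ) ^ (2 : ℝ) = (volume s).toReal := by
    simp [Measure.restrict_apply_univ, measureReal_def]
  rw [hF2, hone2] at h
  have h1 : 0 ≤ ∫ x in s, F x ^ 2 := by positivity
  have h2 : 0 ≤ (volume s).toReal := ENNReal.toReal_nonneg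
  calc (∫ x in s, |F x|) ^ 2
      ≤ ((∫ x in s, F x ^ 2) ^ (1 / (2:ℝ)) * (volume s).toReal ^ (1 / (2:ℝ))) ^ 2 := by
        apply sq_le_sq'
        · have : 0 ≤ ∫ x in s, |F x| := by positivity
          have hnn : 0 ≤ (∫ x in s, F x ^ 2) ^ (1 / (2:ℝ)) * (volume s).toReal ^ (1 / (2:ℝ)) := by
            positivity
          linarith
        · exact h
    _ = (volume s).toReal * ∫ x in s, F x ^ 2 := by
        rw [mul_pow, ← Real.rpow_natCast ((∫ x in s, F x ^ 2) ^ (1 / (2:ℝ))) 2,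
          ← Real.rpow_natCast ((volume s).toReal ^ (1 / (2:ℝ))) 2,
          ← Real.rpow_mul h1, ← Real.rpow_mul h2]
        norm_num
        ring

lemma core_lemma {c₀ : ℝ} (hc : 0 ≤ c₀) {h : ℝ → ℝ} (hint : Integrable h volume)
    (hnn : ∀ t, 0 ≤ h t) {p q ε : ℝ} (hpq : p ≤ q) (hε : 0 < ε)
    (hsupp : ∀ t, t ∉ Set.Ioo p q → h t = 0) (W : ℝ → ℝ)
    (hW : ∀ y ∈ Set.Ioo (p - ε) (q + ε), (∫ t in Set.Ioo (y - ε) (y + ε), h t) / 2 ≤ W y)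
    (hWint : MeasureTheory.IntegrableOn (fun y => fcut c₀ (W y))
      (Set.Ioo (p - ε) (q + ε)) volume) :
    2 * ε * fcut c₀ ((∫ t, h t) / 2) ≤
      ∫ y in Set.Ioo (p - ε) (q + ε), fcut c₀ (W y) := by
  have hWmono : ∀ y ∈ Set.Ioo (p - ε) (q + ε),
      fcut c₀ ((∫ t in Set.Ioo (y - ε) (y + ε), h t) / 2) ≤ fcut c₀ (W y) :=
    fun y hy => fcut_mono hc (hW y hy)
  have hii : ∀ a b : ℝ, IntervalIntegrable h volume a b := fun a b => hint.intervalIntegrable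
  obtain ⟨P, hP⟩ : ∃ P : ℝ → ℝ, P = fun y => ∫ t in p..y, h t := ⟨_, rfl⟩
  have hPapp : ∀ y : ℝ, P y = ∫ t in p..y, h t := fun y => by rw [hP]
  have hPcont : Continuous P := by rw [hP]; exact intervalIntegral.continuous_primitive hii p
  obtain ⟨m, hm⟩ : ∃ m : ℝ, m = ∫ t, h t := ⟨_, rfl⟩
  rw [← hm]
  have hPdiff : ∀ y z : ℝ, P z - P y = ∫ t in y..z, h t := by
    intro y z
    rw [hPapp y, hPapp z]
    have := intervalIntegral.integral_add_adjacent_intervals (hii p y) (hii y z)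
    linarith [this]
  have hPmono : Monotone P := by
    intro y z hyz
    have h1 : P z - P y = ∫ t in y..z, h t := hPdiff y z
    have h2 : 0 ≤ ∫ t in y..z, h t :=
      intervalIntegral.integral_nonneg hyz (fun t _ => hnn t)
    linarith
  have hP0 : ∀ y : ℝ, y ≤ p → P y = 0 := by
    intro y hy
    rw [hPapp y]
    have heq : Set.EqOn h (fun _ => (0:ℝ)) (Set.uIcc p y) := by
      intro t ht
      apply hsupp
      rw [Set.uIcc_of_ge hy] at ht
      intro hmem
      exact absurd (lt_of_le_of_lt ht.2 hmem.1) (lt_irrefl t)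
    rw [intervalIntegral.integral_congr heq]
    simp
  have hPm : ∀ y : ℝ, q ≤ y → P y = m := by
    intro y hy
    rw [hPapp y, hm]
    rw [intervalIntegral.integral_of_le (hpq.trans hy)]
    exact MeasureTheory.setIntegral_eq_integral_of_forall_compl_eq_zero
      (fun t ht => hsupp t (fun hmem => ht ⟨hmem.1, hmem.2.le.trans hy⟩))
  have hm0 : 0 ≤ m := by
    have h1 := hPmono hpq
    rw [hP0 p le_rfl, hPm q le_rfl] at h1
    exact h1
  have hPrange : ∀ y, 0 ≤ P y ∧ P y ≤ m := by
    intro y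
    constructor
    · rcases le_total y p with hyp | hyp
      · exact (hP0 y hyp).ge
      · rw [← hP0 p le_rfl]; exact hPmono hyp
    · rcases le_total q y with hyq | hyq
      · exact (hPm y hyq).le
      · rw [← hPm q le_rfl]; exact hPmono hyq
  obtain ⟨M, hMdef⟩ : ∃ M : ℝ → ℝ, M = fun y => P (y + ε) - P (y - ε) := ⟨_, rfl⟩
  have hMapp : ∀ y : ℝ, M y = P (y + ε) - P (y - ε) := fun y => by rw [hMdef]
  have hMcont : Continuous M := by
    rw [hMdef]
    exact (hPcont.comp (continuous_id.add continuous_const)).sub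
      (hPcont.comp (continuous_id.sub continuous_const))
  have hMnn : ∀ y, 0 ≤ M y := by
    intro y; rw [hMapp y]; exact sub_nonneg.2 (hPmono (by linarith))
  have hMle : ∀ y, M y ≤ m := by
    intro y; rw [hMapp y]
    have := (hPrange (y + ε)).2
    have := (hPrange (y - ε)).1
    linarith
  have hMval : ∀ y : ℝ, (∫ t in Set.Ioo (y - ε) (y + ε), h t) = M y := by
    intro y
    rw [← MeasureTheory.integral_Ioc_eq_integral_Ioo,
      ← intervalIntegral.integral_of_le (by linarith : y - ε ≤ y + ε), hMapp y]
    exact (hPdiff (y - ε) (y + ε)).symm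
  have hle : p - ε ≤ q + ε := by linarith
  -- the total-mass identity
  have hI1 : ∫ y in Set.Ioo (p - ε) (q + ε), M y = 2 * ε * m := by
    rw [← MeasureTheory.integral_Ioc_eq_integral_Ioo,
      ← intervalIntegral.integral_of_le hle]
    have hPii : ∀ a b : ℝ, IntervalIntegrable P volume a b :=
      fun a b => hPcont.intervalIntegrable a b
    have hMeq : Set.EqOn M (fun y => P (y + ε) - P (y - ε)) (Set.uIcc (p - ε) (q + ε)) :=
      fun y _ => hMapp y
    rw [intervalIntegral.integral_congr hMeq]
    have hsub : (∫ y in (p-ε)..(q+ε), (P (y + ε) - P (y - ε))) =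
        (∫ y in (p-ε)..(q+ε), P (y + ε)) - ∫ y in (p-ε)..(q+ε), P (y - ε) := by
      apply intervalIntegral.integral_sub
      · exact ((hPcont.comp (continuous_id.add continuous_const)).intervalIntegrable _ _)
      · exact ((hPcont.comp (continuous_id.sub continuous_const)).intervalIntegrable _ _)
    rw [hsub]
    have e1 : (∫ y in (p-ε)..(q+ε), P (y + ε)) = ∫ z in p..(q+2*ε), P z := by
      rw [intervalIntegral.integral_comp_add_right]
      congr 1 <;> ring
    have e2 : (∫ y in (p-ε)..(q+ε), P (y - ε)) = ∫ z in (p-2*ε)..q, P z := by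
      rw [intervalIntegral.integral_comp_sub_right]
      congr 1 <;> ring
    rw [e1, e2]
    have s1 : (∫ z in p..(q+2*ε), P z) = (∫ z in p..q, P z) + ∫ z in q..(q+2*ε), P z :=
      (intervalIntegral.integral_add_adjacent_intervals (hPii p q) (hPii q (q+2*ε))).symm
    have s2 : (∫ z in (p-2*ε)..q, P z) = (∫ z in (p-2*ε)..p, P z) + ∫ z in p..q, P z :=
      (intervalIntegral.integral_add_adjacent_intervals (hPii (p-2*ε) p) (hPii p q)).symm
    have v1 : (∫ z in q..(q+2*ε), P z) = 2 * ε * m := by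
      rw [intervalIntegral.integral_congr (g := fun _ => m)
        (fun t ht => hPm t (by rw [Set.uIcc_of_le (by linarith : q ≤ q + 2*ε)] at ht; exact ht.1))]
      rw [intervalIntegral.integral_const, smul_eq_mul]
      ring
    have v2 : (∫ z in (p-2*ε)..p, P z) = 0 := by
      rw [intervalIntegral.integral_congr (g := fun _ => (0:ℝ))
        (fun t ht => hP0 t (by rw [Set.uIcc_of_le (by linarith : p - 2*ε ≤ p)] at ht; exact ht.2))]
      simp
    rw [s1, s2, v1, v2]
    ring
  -- integrability facts on the interval
  have hJmeas : MeasurableSet (Set.Ioo (p - ε) (q + ε)) := measurableSet_Ioo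
  have hMint : MeasureTheory.IntegrableOn M (Set.Ioo (p - ε) (q + ε)) volume :=
    (hMcont.intervalIntegrable (p - ε) (q + ε)).1.mono_set Set.Ioo_subset_Ioc_self
  have hconstint : ∀ c : ℝ, MeasureTheory.IntegrableOn (fun _ => c)
      (Set.Ioo (p - ε) (q + ε)) volume := by
    intro c
    exact MeasureTheory.integrableOn_const (by simp [Real.volume_Ioo])
  rcases le_or_gt m 2 with hm2 | hm2
  · -- small mass case
    have hfc : ∀ y, fcut c₀ (M y / 2) = c₀ / 2 * M y := by
      intro y
      have h1 : M y / 2 ≤ 1 := by linarith [hMle y]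
      rw [fcut_eq, min_eq_left h1]
      ring
    calc 2 * ε * fcut c₀ (m / 2)
        = c₀ / 2 * (2 * ε * m) := by
          rw [fcut_eq, min_eq_left (by linarith : m / 2 ≤ 1)]; ring
      _ = ∫ y in Set.Ioo (p - ε) (q + ε), fcut c₀ ((∫ t in Set.Ioo (y - ε) (y + ε), h t) / 2) := by
          rw [← hI1, ← MeasureTheory.integral_const_mul]
          apply MeasureTheory.integral_congr_ae
          filter_upwards with y
          rw [hMval y, hfc y]
      _ ≤ ∫ y in Set.Ioo (p - ε) (q + ε), fcut c₀ (W y) := by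
          apply MeasureTheory.setIntegral_mono_on ?_ hWint hJmeas hWmono
          have : (fun y => fcut c₀ ((∫ t in Set.Ioo (y - ε) (y + ε), h t) / 2))
              = fun y => c₀ / 2 * M y := by
            funext y; rw [hMval y, hfc y]
          rw [this]
          exact hMint.const_mul _
  · -- large mass case
    have hfc : ∀ y, fcut c₀ (M y / 2) = c₀ / 2 * (M y - max (M y - 2) 0) := by
      intro y
      rw [fcut_eq]
      rcases le_total (M y) 2 with hy | hy
      · rw [min_eq_left (by linarith), max_eq_right (by linarith)]
        ring
      · rw [min_eq_right (by linarith), max_eq_left (by linarith)]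
        ring
    have hpos_int : MeasureTheory.IntegrableOn (fun y => max (M y - 2) 0)
        (Set.Ioo (p - ε) (q + ε)) volume :=
      (((hMcont.sub continuous_const).max continuous_const).intervalIntegrable
        (p - ε) (q + ε)).1.mono_set Set.Ioo_subset_Ioc_self
    obtain ⟨E, hE⟩ : ∃ E : Set ℝ, E = Set.Ioo (p - ε) (q + ε) ∩ {y | 2 < M y} := ⟨_, rfl⟩
    have hEmeas : MeasurableSet E := by
      rw [hE]
      exact hJmeas.inter (measurableSet_lt measurable_const hMcont.measurable)
    have hEsub : E ⊆ Set.Ioo (p - ε) (q + ε) := by rw [hE]; exact Set.inter_subset_left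
    have hEvol : volume E ≠ ⊤ := by
      apply ne_top_of_le_ne_top _ (measure_mono hEsub)
      simp [Real.volume_Ioo]
    have hsplit : (∫ y in Set.Ioo (p - ε) (q + ε), max (M y - 2) 0) = ∫ y in E, (M y - 2) := by
      have hia := MeasureTheory.integral_inter_add_diff (μ := volume)
        (s := Set.Ioo (p - ε) (q + ε)) (t := {y | 2 < M y})
        (f := fun y => max (M y - 2) 0)
        (measurableSet_lt measurable_const hMcont.measurable) hpos_int
      have hz : (∫ y in Set.Ioo (p - ε) (q + ε) \ {y | 2 < M y}, max (M y - 2) 0) = 0 := by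
        apply MeasureTheory.setIntegral_eq_zero_of_forall_eq_zero
        intro y hy
        have : M y ≤ 2 := not_lt.1 hy.2
        simp [max_eq_right (by linarith : M y - 2 ≤ 0)]
      have he : (∫ y in E, max (M y - 2) 0) = ∫ y in E, (M y - 2) := by
        apply MeasureTheory.setIntegral_congr_fun hEmeas
        intro y hy
        rw [hE] at hy
        have : 2 < M y := hy.2
        simp [max_eq_left (by linarith : (0:ℝ) ≤ M y - 2)]
      rw [← hia, hz, add_zero, ← hE, he]
    have hEconst : ∀ c : ℝ, MeasureTheory.IntegrableOn (fun _ => c) E volume :=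
      fun c => MeasureTheory.integrableOn_const hEvol
    have hMEint : MeasureTheory.IntegrableOn (fun y => M y - 2) E volume :=
      MeasureTheory.IntegrableOn.mono_set
        (MeasureTheory.Integrable.sub hMint (hconstint 2)) hEsub
    have hEbound : (∫ y in E, (M y - 2)) ≤ 2 * ε * (m - 2) := by
      have hvnn : (0:ℝ) ≤ (volume E).toReal := ENNReal.toReal_nonneg
      rcases le_total ((volume E).toReal) (2 * ε) with hve | hve
      · calc (∫ y in E, (M y - 2)) ≤ ∫ _y in E, (m - 2) := by
              apply MeasureTheory.setIntegral_mono_on hMEint (hEconst (m - 2)) hEmeas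
              intro y _
              linarith [hMle y]
          _ = (volume E).toReal * (m - 2) := by
              rw [MeasureTheory.setIntegral_const, smul_eq_mul, measureReal_def]
          _ ≤ 2 * ε * (m - 2) := by nlinarith
      · have h1 : (∫ y in E, M y) ≤ 2 * ε * m := by
          rw [← hI1]
          apply MeasureTheory.setIntegral_mono_set hMint
            (Filter.Eventually.of_forall fun y => hMnn y)
            (Filter.Eventually.of_forall hEsub)
        have h2 : (∫ y in E, (M y - 2)) = (∫ y in E, M y) - 2 * (volume E).toReal := by
          rw [MeasureTheory.integral_sub (hMint.mono_set hEsub) (hEconst 2)]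
          rw [MeasureTheory.setIntegral_const, smul_eq_mul, measureReal_def]
          ring
        rw [h2]
        nlinarith
    calc 2 * ε * fcut c₀ (m / 2) = 2 * ε * c₀ := by
          rw [fcut_eq, min_eq_right (by linarith : (1:ℝ) ≤ m / 2), mul_one]
      _ ≤ c₀ / 2 * (2 * ε * m - 2 * ε * (m - 2)) := by ring_nf; nlinarith
      _ ≤ c₀ / 2 * ((∫ y in Set.Ioo (p - ε) (q + ε), M y)
            - ∫ y in Set.Ioo (p - ε) (q + ε), max (M y - 2) 0) := by
          rw [hI1, hsplit]
          apply mul_le_mul_of_nonneg_left _ (by linarith)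
          linarith [hEbound]
      _ = ∫ y in Set.Ioo (p - ε) (q + ε), c₀ / 2 * (M y - max (M y - 2) 0) := by
          rw [← MeasureTheory.integral_sub hMint hpos_int, MeasureTheory.integral_const_mul]
      _ = ∫ y in Set.Ioo (p - ε) (q + ε), fcut c₀ ((∫ t in Set.Ioo (y - ε) (y + ε), h t) / 2) := by
          apply MeasureTheory.integral_congr_ae
          filter_upwards with y
          rw [hMval y, hfc y]
      _ ≤ ∫ y in Set.Ioo (p - ε) (q + ε), fcut c₀ (W y) := by
          apply MeasureTheory.setIntegral_mono_on ?_ hWint hJmeas hWmono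
          have : (fun y => fcut c₀ ((∫ t in Set.Ioo (y - ε) (y + ε), h t) / 2))
              = fun y => c₀ / 2 * (M y - max (M y - 2) 0) := by
            funext y; rw [hMval y, hfc y]
          rw [this]
          exact (hMint.sub hpos_int).const_mul _

lemma avgAbs_eq {a b ε : ℝ} {g : ℝ → ℝ} (x : ℝ) :
    avgAbs a b ε g x = (volume (Set.Ioo (x - ε) (x + ε) ∩ Set.Ioo a b)).toReal⁻¹ *
      ∫ t in Set.Ioo (x - ε) (x + ε) ∩ Set.Ioo a b, |g t| := by
  rw [avgAbs, MeasureTheory.setAverage_eq, smul_eq_mul, measureReal_def]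

lemma avgAbs_nonneg {a b ε : ℝ} {g : ℝ → ℝ} (x : ℝ) : 0 ≤ avgAbs a b ε g x := by
  rw [avgAbs_eq]
  apply mul_nonneg (inv_nonneg.2 ENNReal.toReal_nonneg)
  exact MeasureTheory.setIntegral_nonneg (measurableSet_Ioo.inter measurableSet_Ioo)
    (fun t _ => abs_nonneg _)

lemma avgAbs_measurable {a b ε : ℝ} (hε : 0 < ε) {g : ℝ → ℝ} (hg : IntegrableOn g (Set.Ioo a b)) :
    Measurable (avgAbs a b ε g) := by
  have habint : Integrable ((Set.Ioo a b).indicator (fun t => |g t|)) volume :=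
    MeasureTheory.IntegrableOn.integrable_indicator (hg.abs) measurableSet_Ioo
  have key : ∀ x : ℝ, avgAbs a b ε g x =
      (max (min (x + ε) b - max (x - ε) a) 0)⁻¹ *
        ((∫ t in (0:ℝ)..(x + ε), (Set.Ioo a b).indicator (fun t => |g t|) t) -
          ∫ t in (0:ℝ)..(x - ε), (Set.Ioo a b).indicator (fun t => |g t|) t) := by
    intro x
    rw [avgAbs_eq]
    congr 1
    · rw [Set.Ioo_inter_Ioo, Real.volume_Ioo, ENNReal.toReal_ofReal']
    · rw [← MeasureTheory.setIntegral_indicator measurableSet_Ioo]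
      have hadj := intervalIntegral.integral_add_adjacent_intervals
        (a := (0:ℝ)) (b := x - ε) (c := x + ε)
        habint.intervalIntegrable habint.intervalIntegrable
      have : (∫ t in (x - ε)..(x + ε), (Set.Ioo a b).indicator (fun t => |g t|) t)
          = ∫ t in Set.Ioo (x - ε) (x + ε), (Set.Ioo a b).indicator (fun t => |g t|) t := by
        rw [intervalIntegral.integral_of_le (by linarith : x - ε ≤ x + ε),
          MeasureTheory.integral_Ioc_eq_integral_Ioo]
      rw [← this]
      linarith [hadj]
  have hcontP : Continuous fun y : ℝ => ∫ t in (0:ℝ)..y, (Set.Ioo a b).indicator (fun t => |g t|) t :=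
    intervalIntegral.continuous_primitive (fun _ _ => habint.intervalIntegrable) 0
  have h1 : Measurable fun x : ℝ => (max (min (x + ε) b - max (x - ε) a) 0)⁻¹ :=
    (((continuous_id.add continuous_const).min continuous_const).sub
      ((continuous_id.sub continuous_const).max continuous_const)).max continuous_const
      |>.measurable.inv
  have h2 : Measurable fun x : ℝ =>
      ((∫ t in (0:ℝ)..(x + ε), (Set.Ioo a b).indicator (fun t => |g t|) t) -
        ∫ t in (0:ℝ)..(x - ε), (Set.Ioo a b).indicator (fun t => |g t|) t) :=
    ((hcontP.comp (continuous_id.add continuous_const)).sub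
      (hcontP.comp (continuous_id.sub continuous_const))).measurable
  have : avgAbs a b ε g = fun x =>
      (max (min (x + ε) b - max (x - ε) a) 0)⁻¹ *
        ((∫ t in (0:ℝ)..(x + ε), (Set.Ioo a b).indicator (fun t => |g t|) t) -
          ∫ t in (0:ℝ)..(x - ε), (Set.Ioo a b).indicator (fun t => |g t|) t) := funext key
  rw [this]
  exact h1.mul h2

lemma half_le_avgAbs {a b ε p q : ℝ} (hε : 0 < ε) {g : ℝ → ℝ}
    (hg : IntegrableOn g (Set.Ioo a b)) (hsub : Set.Ioo p q ⊆ Set.Ioo a b)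
    {y : ℝ} (hy : y ∈ Set.Ioo a b) :
    (∫ t in Set.Ioo (y - ε) (y + ε), (Set.Ioo p q).indicator (fun t => |g t|) t) / 2 ≤
      ε * avgAbs a b ε g y := by
  set S := Set.Ioo (y - ε) (y + ε) ∩ Set.Ioo a b with hS
  have hSmeas : MeasurableSet S := measurableSet_Ioo.inter measurableSet_Ioo
  have hgabsS : MeasureTheory.IntegrableOn (fun t => |g t|) S volume :=
    MeasureTheory.IntegrableOn.mono_set (hg.abs) Set.inter_subset_right
  have h1 : (∫ t in Set.Ioo (y - ε) (y + ε), (Set.Ioo p q).indicator (fun t => |g t|) t)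
      ≤ ∫ t in S, |g t| := by
    rw [MeasureTheory.setIntegral_indicator measurableSet_Ioo]
    apply MeasureTheory.setIntegral_mono_set hgabsS
      (Filter.Eventually.of_forall fun t => abs_nonneg _)
    apply Filter.Eventually.of_forall
    exact fun t ht => ⟨ht.1, hsub ht.2⟩
  have hIS : 0 ≤ ∫ t in S, |g t| :=
    MeasureTheory.setIntegral_nonneg hSmeas (fun t _ => abs_nonneg _)
  have hvolpos : 0 < (volume S).toReal := by
    rw [hS, Set.Ioo_inter_Ioo, Real.volume_Ioo, ENNReal.toReal_ofReal']
    have h1 : max (y - ε) a < y := max_lt (by linarith) hy.1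
    have h2 : y < min (y + ε) b := lt_min (by linarith) hy.2
    rw [lt_max_iff]
    left; linarith
  have hvolle : (volume S).toReal ≤ 2 * ε := by
    have : volume S ≤ volume (Set.Ioo (y - ε) (y + ε)) := measure_mono Set.inter_subset_left
    have h2 : volume (Set.Ioo (y - ε) (y + ε)) = ENNReal.ofReal (2 * ε) := by
      rw [Real.volume_Ioo]; congr 1; ring
    calc (volume S).toReal ≤ (ENNReal.ofReal (2 * ε)).toReal := by
          apply ENNReal.toReal_mono ENNReal.ofReal_ne_top (h2 ▸ this)
      _ = 2 * ε := ENNReal.toReal_ofReal (by linarith)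
  rw [avgAbs_eq, ← hS]
  calc (∫ t in Set.Ioo (y - ε) (y + ε), (Set.Ioo p q).indicator (fun t => |g t|) t) / 2
      ≤ (∫ t in S, |g t|) / 2 := by linarith
    _ ≤ ε * ((volume S).toReal⁻¹ * ∫ t in S, |g t|) := by
        have heq : ε * ((volume S).toReal⁻¹ * ∫ t in S, |g t|)
            = ε * (∫ t in S, |g t|) / (volume S).toReal := by
          field_simp
        rw [heq, le_div_iff₀ hvolpos]
        nlinarith [hIS, hvolle, hε]

lemma fcut_avg_integrableOn {a b c₀ ε : ℝ} (hc : 0 ≤ c₀) (hε : 0 < ε) {g : ℝ → ℝ}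
    (hg : IntegrableOn g (Set.Ioo a b)) {s : Set ℝ} (hs : MeasurableSet s)
    (hvol : volume s ≠ ⊤) :
    MeasureTheory.IntegrableOn (fun y => fcut c₀ (ε * avgAbs a b ε g y)) s volume := by
  have hmeas : Measurable (fun y => fcut c₀ (ε * avgAbs a b ε g y)) := by
    have h1 : Measurable (fun y => ε * avgAbs a b ε g y) :=
      (avgAbs_measurable hε hg).const_mul ε
    have : (fun y => fcut c₀ (ε * avgAbs a b ε g y))
        = fun y => c₀ * min (ε * avgAbs a b ε g y) 1 := by
      funext y; rw [fcut_eq]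
    rw [this]
    exact (h1.min measurable_const).const_mul c₀
  apply MeasureTheory.Integrable.mono' (g := fun _ => c₀)
    (MeasureTheory.integrableOn_const hvol)
    (hmeas.aestronglyMeasurable)
  apply Filter.Eventually.of_forall
  intro y
  have h0 : 0 ≤ ε * avgAbs a b ε g y := mul_nonneg hε.le (avgAbs_nonneg y)
  rw [Real.norm_eq_abs, abs_of_nonneg (fcut_nonneg hc h0), fcut_eq]
  nlinarith [min_le_right (ε * avgAbs a b ε g y) (1:ℝ)]

set_option maxHeartbeats 2000000 in
/-- **Proposition (lower bound for the jump part).**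
For every open `A ⊆ (a,b)` and every `(u,γ)` with `u ∈ BV(a,b)`, `γ = D^s u + g·L¹`,
`g ∈ L¹(a,b)` and `u′ − g ∈ L²(a,b)`, the localized Γ-lower limit satisfies
`E′(u,γ,A) ≥ 2 Σ_{x ∈ J_u ∩ A} f(|[u](x)|/2)`. -/
theorem eigendamage_liminf_jump_part
    (a b c₀ K : ℝ) (ha : 0 < a) (hab : a < b) (hc₀ : 0 < c₀) (hK : 0 < K)
    (A : Set ℝ) (hAopen : IsOpen A) (hAsub : A ⊆ Set.Ioo a b)
    (u : ℝ → ℝ) (γ Du : SignedMeasure ℝ) (g : ℝ → ℝ)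
    (hu : IntegrableOn u (Set.Ioo a b))
    (hDu : HasDerivMeasureOn (Set.Ioo a b) u Du)
    (hg : IntegrableOn g (Set.Ioo a b))
    (hγ : γ = Du.singularPart volume + (volume.restrict (Set.Ioo a b)).withDensityᵥ g)
    (hL2 : MemLp (fun x => Du.rnDeriv volume x - g x) 2 (volume.restrict (Set.Ioo a b))) :
    2 * ∑' p : ↥(jumpSet a b u ∩ A), ENNReal.ofReal (fcut c₀ (|jump u ↑p| / 2)) ≤
      GammaLowerLoc a b c₀ K A u γ := by
  rw [GammaLowerLoc]
  refine le_iInf fun uε => le_iInf fun γε => le_iInf fun hL1 => le_iInf fun _hFlat => ?_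
  obtain ⟨L, hLdef⟩ : ∃ L, L = liminf (fun ε => EepsLoc a b c₀ K ε A (uε ε) (γε ε))
      (𝓝[>] (0:ℝ)) := ⟨_, rfl⟩
  rw [← hLdef]
  rcases eq_top_or_lt_top L with hLtop | hLlt
  · rw [hLtop]; exact le_top
  have hAmeas : MeasurableSet A := hAopen.measurableSet
  have hAvol : volume A ≠ ⊤ := by
    apply ne_top_of_le_ne_top _ (measure_mono hAsub)
    simp [Real.volume_Ioo]
  -- reduce to finite sums and a real inequality
  rw [ENNReal.tsum_eq_iSup_sum, ENNReal.mul_iSup]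
  refine iSup_le fun S => ?_
  classical
  obtain ⟨T, hTdef⟩ : ∃ T : Finset ℝ, T = S.image Subtype.val := ⟨_, rfl⟩
  have hTmem : ∀ x ∈ T, x ∈ jumpSet a b u ∩ A := by
    intro x hx
    rw [hTdef, Finset.mem_image] at hx
    obtain ⟨p, _, rfl⟩ := hx
    exact p.2
  have hsum_eq : ∑ p ∈ S, ENNReal.ofReal (fcut c₀ (|jump u ↑p| / 2))
      = ∑ x ∈ T, ENNReal.ofReal (fcut c₀ (|jump u x| / 2)) := by
    rw [hTdef, Finset.sum_image]
    intro p _ q _ hpq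
    exact Subtype.val_injective hpq
  rw [hsum_eq]
  have hofv : ∑ x ∈ T, ENNReal.ofReal (fcut c₀ (|jump u x| / 2))
      = ENNReal.ofReal (∑ x ∈ T, fcut c₀ (|jump u x| / 2)) :=
    (ENNReal.ofReal_sum_of_nonneg fun x _ =>
      fcut_nonneg hc₀.le (by positivity)).symm
  rw [hofv]
  have h2 : (2 : ℝ≥0∞) = ENNReal.ofReal 2 := by norm_num
  rw [h2, ← ENNReal.ofReal_mul (by norm_num : (0:ℝ) ≤ 2)]
  suffices hreal : 2 * ∑ x ∈ T, fcut c₀ (|jump u x| / 2) ≤ L.toReal by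
    calc ENNReal.ofReal (2 * ∑ x ∈ T, fcut c₀ (|jump u x| / 2))
        ≤ ENNReal.ofReal L.toReal := ENNReal.ofReal_le_ofReal hreal
      _ = L := ENNReal.ofReal_toReal hLlt.ne
  -- the real-valued main estimate
  obtain ⟨M, hM⟩ : ∃ M : ℝ, M = L.toReal + 1 := ⟨_, rfl⟩
  have hMpos : 0 < M := by rw [hM]; positivity
  apply le_of_le_add_mul (C := 1 + 5 * c₀ * T.card) (by positivity)
  intro δ hδ hδ1
  -- choice of the localization radius r
  have hex : ∀ x ∈ T, ∃ ρ : ℝ, 0 < ρ ∧ Set.Ioo (x - ρ) (x + ρ) ⊆ A ∧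
      (∀ t ∈ Set.Ioo (x - ρ) x, |u t - llim u x| ≤ δ) ∧
      (∀ t ∈ Set.Ioo x (x + ρ), |u t - rlim u x| ≤ δ) := by
    intro x hx
    have hxJ : x ∈ jumpSet a b u := (hTmem x hx).1
    have hxA : x ∈ A := (hTmem x hx).2
    obtain ⟨hxab, ⟨l, hl⟩, ⟨rr, hrr'⟩, _⟩ := hxJ
    have hllim : llim u x = l := hl.limUnder_eq
    have hrlim : rlim u x = rr := hrr'.limUnder_eq
    obtain ⟨ρ1, hρ1pos, hball⟩ := Metric.isOpen_iff.1 hAopen x hxA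
    rw [Real.ball_eq_Ioo] at hball
    have hmeml : u ⁻¹' Metric.closedBall l δ ∈ 𝓝[<] x :=
      hl (Metric.closedBall_mem_nhds l hδ)
    have hmemr : u ⁻¹' Metric.closedBall rr δ ∈ 𝓝[>] x :=
      hrr' (Metric.closedBall_mem_nhds rr hδ)
    obtain ⟨l', hl'x, hl'sub⟩ := mem_nhdsLT_iff_exists_Ioo_subset.1 hmeml
    obtain ⟨q', hq'x, hq'sub⟩ := mem_nhdsGT_iff_exists_Ioo_subset.1 hmemr
    have hl'lt : l' < x := hl'x
    have hq'gt : x < q' := hq'x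
    refine ⟨min ρ1 (min (x - l') (q' - x)), ?_, ?_, ?_, ?_⟩
    · exact lt_min hρ1pos (lt_min (by linarith) (by linarith))
    · refine Set.Subset.trans ?_ hball
      apply Set.Ioo_subset_Ioo <;>
        [linarith [min_le_left ρ1 (min (x - l') (q' - x))];
         linarith [min_le_left ρ1 (min (x - l') (q' - x))]]
    · intro t ht
      rw [hllim]
      have h1 : min ρ1 (min (x - l') (q' - x)) ≤ x - l' :=
        le_trans (min_le_right _ _) (min_le_left _ _)
      have htl : t ∈ Set.Ioo l' x := ⟨by linarith [ht.1], ht.2⟩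
      have := hl'sub htl
      rw [Set.mem_preimage, Metric.mem_closedBall, Real.dist_eq] at this
      exact this
    · intro t ht
      rw [hrlim]
      have h1 : min ρ1 (min (x - l') (q' - x)) ≤ q' - x :=
        le_trans (min_le_right _ _) (min_le_right _ _)
      have htr : t ∈ Set.Ioo x q' := ⟨ht.1, by linarith [ht.2]⟩
      have := hq'sub htr
      rw [Set.mem_preimage, Metric.mem_closedBall, Real.dist_eq] at this
      exact this
  choose ρfun hρ using hex
  obtain ⟨F, hF⟩ : ∃ F : ℝ → ℝ, F = fun x => if hx : x ∈ T then ρfun x hx else 1 := ⟨_, rfl⟩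
  obtain ⟨r₁, hr₁pos, hr₁⟩ := exists_pos_forall_le T F
    (by intro x hx; rw [hF]; simp only [dif_pos hx]; exact (hρ x hx).1)
  obtain ⟨r₂, hr₂pos, hr₂⟩ := exists_pos_forall_le T.offDiag (fun p => |p.1 - p.2| / 2)
    (by
      intro p hp
      obtain ⟨h1, h2, h3⟩ := Finset.mem_offDiag.1 hp
      have : p.1 - p.2 ≠ 0 := sub_ne_zero.2 h3
      positivity)
  obtain ⟨r, hrdef⟩ : ∃ r : ℝ, r = min r₁ (min r₂ (δ^2 / (2*M))) := ⟨_, rfl⟩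
  have hrpos : 0 < r := by
    rw [hrdef]
    exact lt_min hr₁pos (lt_min hr₂pos (by positivity))
  have hrρ : ∀ x (hx : x ∈ T), r ≤ ρfun x hx := by
    intro x hx
    have := hr₁ x hx
    rw [hF] at this
    simp only [dif_pos hx] at this
    exact le_trans (by rw [hrdef]; exact min_le_left _ _) this
  have hrIA : ∀ x ∈ T, Set.Ioo (x - r) (x + r) ⊆ A := by
    intro x hx
    refine Set.Subset.trans ?_ (hρ x hx).2.1
    apply Set.Ioo_subset_Ioo <;> linarith [hrρ x hx]
  have hrl : ∀ x (hx : x ∈ T), ∀ t ∈ Set.Ioo (x - r) x, |u t - llim u x| ≤ δ := by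
    intro x hx t ht
    exact (hρ x hx).2.2.1 t ⟨by linarith [ht.1, hrρ x hx], ht.2⟩
  have hrr : ∀ x (hx : x ∈ T), ∀ t ∈ Set.Ioo x (x + r), |u t - rlim u x| ≤ δ := by
    intro x hx t ht
    exact (hρ x hx).2.2.2 t ⟨ht.1, by linarith [ht.2, hrρ x hx]⟩
  have hrgap : ∀ x ∈ T, ∀ y ∈ T, x ≠ y → 2 * r ≤ |x - y| := by
    intro x hx y hy hxy
    have := hr₂ (x, y) (Finset.mem_offDiag.2 ⟨hx, hy, hxy⟩)
    have hr' : r ≤ |x - y| / 2 := le_trans (by rw [hrdef]; exact le_trans (min_le_right _ _) (min_le_left _ _)) this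
    linarith
  have hrM : 2 * r * M ≤ δ ^ 2 := by
    have hr' : r ≤ δ^2 / (2*M) := by
      rw [hrdef]; exact le_trans (min_le_right _ _) (min_le_right _ _)
    calc 2 * r * M ≤ 2 * (δ^2/(2*M)) * M := by nlinarith
      _ = δ^2 := by field_simp
  -- choice of ε
  obtain ⟨η, hηdef⟩ : ∃ η : ℝ, η = δ * r / 8 := ⟨_, rfl⟩
  have hηpos : 0 < η := by rw [hηdef]; positivity
  have hfreq : ∃ᶠ ε in 𝓝[>](0:ℝ),
      EepsLoc a b c₀ K ε A (uε ε) (γε ε) < L + ENNReal.ofReal δ := by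
    apply Filter.frequently_lt_of_liminf_lt
      (hu := Filter.isCoboundedUnder_ge_of_eventually_le _ (x := ⊤)
        (Filter.Eventually.of_forall fun _ => le_top))
    rw [← hLdef]
    exact ENNReal.lt_add_right hLlt.ne (ENNReal.ofReal_pos.2 hδ).ne'
  have hev1 : ∀ᶠ ε in 𝓝[>](0:ℝ), ε ∈ Set.Ioo (0:ℝ) (r/4) :=
    Ioo_mem_nhdsGT_of_mem ⟨le_rfl, by positivity⟩
  have hev2 : ∀ᶠ ε in 𝓝[>](0:ℝ), (∫ x in Set.Ioo a b, |uε ε x - u x|) < η :=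
    hL1.eventually_lt_const hηpos
  obtain ⟨ε, hEε, ⟨hεpos, hεr⟩, hη⟩ := (hfreq.and_eventually (hev1.and hev2)).exists
  -- unpack the approximate energy
  rw [EepsLoc] at hEε
  simp only [iInf_lt_iff] at hEε
  obtain ⟨u', g', hW11, hKb, hg'int, hγeq, hL2', hcore⟩ := hEε
  have hD0 : 0 ≤ ∫ x in A, (u' x - g' x)^2 :=
    MeasureTheory.setIntegral_nonneg hAmeas (fun x _ => sq_nonneg _)
  have hΦ0 : 0 ≤ ∫ x in A, fcut c₀ (ε * avgAbs a b ε g' x) :=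
    MeasureTheory.setIntegral_nonneg hAmeas
      (fun x _ => fcut_nonneg hc₀.le (mul_nonneg hεpos.le (avgAbs_nonneg x)))
  have hEreal : EpsCoreOn a b c₀ ε A u' g' ≤ L.toReal + δ := by
    rcases le_or_gt (EpsCoreOn a b c₀ ε A u' g') 0 with hE0 | hE0
    · have : (0:ℝ) ≤ L.toReal := ENNReal.toReal_nonneg
      linarith
    · have h1 : L + ENNReal.ofReal δ = ENNReal.ofReal (L.toReal + δ) := by
        rw [ENNReal.ofReal_add ENNReal.toReal_nonneg hδ.le, ENNReal.ofReal_toReal hLlt.ne]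
      rw [h1] at hcore
      have := (ENNReal.ofReal_lt_ofReal_iff_of_nonneg hE0.le).1 hcore
      linarith
  have hcore_eq : EpsCoreOn a b c₀ ε A u' g'
      = (∫ x in A, (u' x - g' x)^2)
        + (1/ε) * ∫ x in A, fcut c₀ (ε * avgAbs a b ε g' x) := rfl
  have hDM : (∫ x in A, (u' x - g' x)^2) ≤ M := by
    rw [hM]
    have h1 : 0 ≤ (1/ε) * ∫ x in A, fcut c₀ (ε * avgAbs a b ε g' x) := by positivity
    rw [hcore_eq] at hEreal
    linarith
  have hΦb : (1/ε) * (∫ x in A, fcut c₀ (ε * avgAbs a b ε g' x)) ≤ L.toReal + δ := by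
    rw [hcore_eq] at hEreal
    linarith
  -- integrability facts
  have h_sq_int : MeasureTheory.IntegrableOn (fun x => (u' x - g' x)^2) (Set.Ioo a b) volume :=
    hL2'.integrable_sq
  have hfA_int : MeasureTheory.IntegrableOn (fun y => fcut c₀ (ε * avgAbs a b ε g' y)) A volume :=
    fcut_avg_integrableOn hc₀.le hεpos hg'int hAmeas hAvol
  have hu_diff_int : MeasureTheory.IntegrableOn (fun t => |uε ε t - u t|) (Set.Ioo a b) volume :=
    MeasureTheory.Integrable.abs (MeasureTheory.Integrable.sub hW11.1 hu)
  -- main per-jump-point estimate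
  have hBx : ∀ x : ℝ, ∃ B : Set ℝ, MeasurableSet B ∧ (x ∈ T →
      (B ⊆ Set.Ioo (x - r) (x + r) ∧
        2 * ε * fcut c₀ ((|jump u x| - 5*δ)/2) ≤
          ∫ y in B, fcut c₀ (ε * avgAbs a b ε g' y))) := by
    intro x
    by_cases hx : x ∈ T
    swap
    · exact ⟨∅, MeasurableSet.empty, fun h => absurd h hx⟩
    have hxJ : x ∈ jumpSet a b u := (hTmem x hx).1
    have hxA : x ∈ A := (hTmem x hx).2
    have hxab : x ∈ Set.Ioo a b := hxJ.1
    have hIrsub : Set.Ioo (x - r) (x + r) ⊆ Set.Ioo a b :=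
      Set.Subset.trans (hrIA x hx) hAsub
    -- find good evaluation points p and q
    have hpt : ∀ c d : ℝ, c < d → Set.Ioo c d ⊆ Set.Ioo a b → d - c = r/4 →
        ∃ p ∈ Set.Ioo c d, |uε ε p - u p| ≤ δ := by
      intro c d hcd hsub hlen
      by_contra hcon
      push_neg at hcon
      have h1 : (∫ _t in Set.Ioo c d, δ) ≤ ∫ t in Set.Ioo c d, |uε ε t - u t| := by
        apply MeasureTheory.setIntegral_mono_on
          (MeasureTheory.integrableOn_const (by simp [Real.volume_Ioo]))
          (hu_diff_int.mono_set hsub) measurableSet_Ioo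
        intro t ht
        exact (hcon t ht).le
      have h2 : (∫ _t in Set.Ioo c d, δ) = (r/4) * δ := by
        rw [MeasureTheory.setIntegral_const, smul_eq_mul, measureReal_def, Real.volume_Ioo,
          ENNReal.toReal_ofReal (by linarith), hlen]
      have h3 : (∫ t in Set.Ioo c d, |uε ε t - u t|) ≤ ∫ t in Set.Ioo a b, |uε ε t - u t| :=
        MeasureTheory.setIntegral_mono_set hu_diff_int
          (Filter.Eventually.of_forall fun t => abs_nonneg _)
          (Filter.Eventually.of_forall hsub)
      rw [hηdef] at hη
      nlinarith [h1, h2, h3, hη, hδ, hrpos]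
    obtain ⟨p, hpI, hpclose⟩ := hpt (x - 3*r/4) (x - r/2) (by linarith)
      (Set.Subset.trans (Set.Ioo_subset_Ioo (by linarith) (by linarith)) hIrsub) (by ring)
    obtain ⟨q, hqI, hqclose⟩ := hpt (x + r/2) (x + 3*r/4) (by linarith)
      (Set.Subset.trans (Set.Ioo_subset_Ioo (by linarith) (by linarith)) hIrsub) (by ring)
    have hpq : p < q := by linarith [hpI.2, hqI.1]
    have hpab : p ∈ Set.Ioo a b := hIrsub ⟨by linarith [hpI.1], by linarith [hpI.2]⟩
    have hqab : q ∈ Set.Ioo a b := hIrsub ⟨by linarith [hqI.1], by linarith [hqI.2]⟩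
    have hIpq_sub : Set.Ioo p q ⊆ Set.Ioo (x - r) (x + r) :=
      Set.Ioo_subset_Ioo (by linarith [hpI.1]) (by linarith [hqI.2])
    have hIpq_ab : Set.Ioo p q ⊆ Set.Ioo a b := hIpq_sub.trans hIrsub
    -- fundamental theorem of calculus for uε
    have hFTC : uε ε q - uε ε p = ∫ t in p..q, u' t := hW11.2.2 p hpab q hqab hpq.le
    -- interval integrabilities
    haveI hfin : IsFiniteMeasure (volume.restrict (Set.Ioo a b)) := by
      constructor
      rw [Measure.restrict_apply_univ, Real.volume_Ioo]
      exact ENNReal.ofReal_lt_top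
    have hFint : MeasureTheory.IntegrableOn (fun t => u' t - g' t) (Set.Ioo a b) volume :=
      hL2'.integrable one_le_two
    have hIocsub : Set.Ioc p q ⊆ Set.Ioo a b :=
      fun t ht => ⟨lt_trans hpab.1 ht.1, lt_of_le_of_lt ht.2 hqab.2⟩
    have hFii : IntervalIntegrable (fun t => u' t - g' t) volume p q := by
      rw [intervalIntegrable_iff_integrableOn_Ioc_of_le hpq.le]
      exact hFint.mono_set hIocsub
    have hgii : IntervalIntegrable g' volume p q := by
      rw [intervalIntegrable_iff_integrableOn_Ioc_of_le hpq.le]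
      exact hg'int.mono_set hIocsub
    -- Cauchy–Schwarz bound for the elastic part
    have hvolpq : (volume (Set.Ioo p q)).toReal ≤ 2*r := by
      rw [Real.volume_Ioo, ENNReal.toReal_ofReal (by linarith)]
      linarith [hpI.1, hqI.2]
    have hL2pq : MemLp (fun t => u' t - g' t) 2 (volume.restrict (Set.Ioo p q)) :=
      hL2'.mono_measure (Measure.restrict_mono hIpq_ab le_rfl)
    have hsqnn : 0 ≤ ∫ t in Set.Ioo p q, (u' t - g' t)^2 :=
      MeasureTheory.setIntegral_nonneg measurableSet_Ioo (fun t _ => sq_nonneg _)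
    have hsqle : (∫ t in Set.Ioo p q, (u' t - g' t)^2) ≤ M := by
      calc (∫ t in Set.Ioo p q, (u' t - g' t)^2) ≤ ∫ x in A, (u' x - g' x)^2 :=
            MeasureTheory.setIntegral_mono_set (h_sq_int.mono_set hAsub)
              (Filter.Eventually.of_forall fun t => sq_nonneg _)
              (Filter.Eventually.of_forall (hIpq_sub.trans (hrIA x hx)))
        _ ≤ M := hDM
    have hcs := cs_lemma (s := Set.Ioo p q) (by simp [Real.volume_Ioo]) hL2pq
    have habs : (∫ t in Set.Ioo p q, |u' t - g' t|) ≤ δ := by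
      have h1 : (∫ t in Set.Ioo p q, |u' t - g' t|)^2 ≤ δ^2 := by
        calc (∫ t in Set.Ioo p q, |u' t - g' t|)^2
            ≤ (volume (Set.Ioo p q)).toReal * ∫ t in Set.Ioo p q, (u' t - g' t)^2 := hcs
          _ ≤ 2*r*M := by nlinarith [ENNReal.toReal_nonneg (a := volume (Set.Ioo p q))]
          _ ≤ δ^2 := hrM
      nlinarith [MeasureTheory.setIntegral_nonneg (μ := volume) measurableSet_Ioo
        (fun t (_ : t ∈ Set.Ioo p q) => abs_nonneg (u' t - g' t)), hδ]
    -- jump size estimates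
    have hpl : |u p - llim u x| ≤ δ := hrl x hx p ⟨by linarith [hpI.1], by linarith [hpI.2]⟩
    have hqr : |u q - rlim u x| ≤ δ := hrr x hx q ⟨by linarith [hqI.1], by linarith [hqI.2]⟩
    have hjump1 : |jump u x| - 2*δ ≤ |u q - u p| := by
      have hdecomp : jump u x = (u q - u p) - (u q - rlim u x) + (u p - llim u x) := by
        show rlim u x - llim u x = _
        ring
      have h1 : |jump u x| ≤ |u q - u p| + |u q - rlim u x| + |u p - llim u x| := by
        rw [hdecomp]
        calc |(u q - u p) - (u q - rlim u x) + (u p - llim u x)|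
            ≤ |(u q - u p) - (u q - rlim u x)| + |u p - llim u x| := abs_add_le _ _
          _ ≤ |u q - u p| + |u q - rlim u x| + |u p - llim u x| := by
              linarith [abs_sub (u q - u p) (u q - rlim u x)]
      linarith
    have hjump2 : |u q - u p| - 2*δ ≤ |uε ε q - uε ε p| := by
      have hdecomp : u q - u p = (uε ε q - uε ε p) - (uε ε q - u q) + (uε ε p - u p) := by
        ring
      have h1 : |u q - u p| ≤ |uε ε q - uε ε p| + |uε ε q - u q| + |uε ε p - u p| := by
        rw [hdecomp]
        calc |(uε ε q - uε ε p) - (uε ε q - u q) + (uε ε p - u p)|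
            ≤ |(uε ε q - uε ε p) - (uε ε q - u q)| + |uε ε p - u p| := abs_add_le _ _
          _ ≤ |uε ε q - uε ε p| + |uε ε q - u q| + |uε ε p - u p| := by
              linarith [abs_sub (uε ε q - uε ε p) (uε ε q - u q)]
      linarith [hpclose, hqclose]
    -- splitting of the interval integral
    have hsplit : (∫ t in p..q, u' t) = (∫ t in p..q, (u' t - g' t)) + ∫ t in p..q, g' t := by
      rw [← intervalIntegral.integral_add hFii hgii]
      apply intervalIntegral.integral_congr
      intro t _
      simp
    have hiabs : |∫ t in p..q, (u' t - g' t)| ≤ δ := by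
      calc |∫ t in p..q, (u' t - g' t)| ≤ ∫ t in p..q, |u' t - g' t| :=
            intervalIntegral.abs_integral_le_integral_abs hpq.le
        _ = ∫ t in Set.Ioo p q, |u' t - g' t| := by
            rw [intervalIntegral.integral_of_le hpq.le,
              MeasureTheory.integral_Ioc_eq_integral_Ioo]
        _ ≤ δ := habs
    have hm_lower : |jump u x| - 5*δ ≤ ∫ t in Set.Ioo p q, |g' t| := by
      have heq : (∫ t in p..q, g' t) = (∫ t in p..q, u' t) - ∫ t in p..q, (u' t - g' t) := by
        rw [hsplit]; ring
      have h1 : |∫ t in p..q, u' t| - |∫ t in p..q, (u' t - g' t)| ≤ |∫ t in p..q, g' t| := by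
        rw [heq]
        exact abs_sub_abs_le_abs_sub _ _
      have h2 : |∫ t in p..q, u' t| = |uε ε q - uε ε p| := by rw [hFTC]
      have h3 : |∫ t in p..q, g' t| ≤ ∫ t in Set.Ioo p q, |g' t| := by
        calc |∫ t in p..q, g' t| ≤ ∫ t in p..q, |g' t| :=
              intervalIntegral.abs_integral_le_integral_abs hpq.le
          _ = ∫ t in Set.Ioo p q, |g' t| := by
              rw [intervalIntegral.integral_of_le hpq.le,
                MeasureTheory.integral_Ioc_eq_integral_Ioo]
      rw [h2] at h1
      linarith [hjump1, hjump2, hiabs]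
    -- apply the core lemma
    have hεr4 : ε < r/4 := hεr
    have hBsub : Set.Ioo (p - ε) (q + ε) ⊆ Set.Ioo (x - r) (x + r) :=
      Set.Ioo_subset_Ioo (by linarith [hpI.1]) (by linarith [hqI.2])
    refine ⟨Set.Ioo (p - ε) (q + ε), measurableSet_Ioo, fun _ => ⟨hBsub, ?_⟩⟩
    have hind_int : Integrable ((Set.Ioo p q).indicator (fun t => |g' t|)) volume :=
      MeasureTheory.IntegrableOn.integrable_indicator
        (MeasureTheory.IntegrableOn.mono_set (hg'int.abs) hIpq_ab) measurableSet_Ioo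
    have hind_nn : ∀ t, 0 ≤ (Set.Ioo p q).indicator (fun t => |g' t|) t :=
      fun t => Set.indicator_nonneg (fun s _ => abs_nonneg _) t
    have hind_supp : ∀ t, t ∉ Set.Ioo p q → (Set.Ioo p q).indicator (fun t => |g' t|) t = 0 :=
      fun t ht => Set.indicator_of_notMem ht _
    have hW : ∀ y ∈ Set.Ioo (p - ε) (q + ε),
        (∫ t in Set.Ioo (y - ε) (y + ε), (Set.Ioo p q).indicator (fun t => |g' t|) t) / 2 ≤
          ε * avgAbs a b ε g' y := by
      intro y hy
      exact half_le_avgAbs hεpos hg'int hIpq_ab (hIrsub (hBsub hy))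
    have hWint : MeasureTheory.IntegrableOn (fun y => fcut c₀ (ε * avgAbs a b ε g' y))
        (Set.Ioo (p - ε) (q + ε)) volume :=
      fcut_avg_integrableOn hc₀.le hεpos hg'int measurableSet_Ioo (by simp [Real.volume_Ioo])
    have hcore' := core_lemma hc₀.le hind_int hind_nn hpq.le hεpos hind_supp
      (fun y => ε * avgAbs a b ε g' y) hW hWint
    have hmass : (∫ t, (Set.Ioo p q).indicator (fun t => |g' t|) t)
        = ∫ t in Set.Ioo p q, |g' t| := by
      rw [MeasureTheory.integral_indicator measurableSet_Ioo]
    calc 2 * ε * fcut c₀ ((|jump u x| - 5*δ)/2)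
        ≤ 2 * ε * fcut c₀ ((∫ t, (Set.Ioo p q).indicator (fun t => |g' t|) t)/2) := by
          apply mul_le_mul_of_nonneg_left _ (by positivity)
          apply fcut_mono hc₀.le
          rw [hmass]
          linarith [hm_lower]
      _ ≤ ∫ y in Set.Ioo (p - ε) (q + ε), fcut c₀ (ε * avgAbs a b ε g' y) := hcore' 
  choose B hBmeas hBprop using hBx
  -- summation over the jump points
  have hsum : ∑ x ∈ T, 2 * ε * fcut c₀ ((|jump u x| - 5*δ)/2)
      ≤ ∫ y in A, fcut c₀ (ε * avgAbs a b ε g' y) := by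
    have hBsubA : ∀ x ∈ T, B x ⊆ A :=
      fun x hx => Set.Subset.trans ((hBprop x hx).1) (hrIA x hx)
    have hdisj : Set.Pairwise ↑T (Function.onFun Disjoint B) := by
      intro x hx y hy hxy
      simp only [Function.onFun]
      rw [Set.disjoint_left]
      intro t ht1 ht2
      have h1 : t ∈ Set.Ioo (x - r) (x + r) := ((hBprop x hx).1) ht1
      have h2 : t ∈ Set.Ioo (y - r) (y + r) := ((hBprop y hy).1) ht2
      have h3 : 2 * r ≤ |x - y| := hrgap x hx y hy hxy
      have h4 : |x - y| ≤ |x - t| + |t - y| := abs_sub_le x t y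
      have h5 : |x - t| < r := abs_lt.2 ⟨by linarith [h1.2], by linarith [h1.1]⟩
      have h6 : |t - y| < r := abs_lt.2 ⟨by linarith [h2.1], by linarith [h2.2]⟩
      linarith
    calc ∑ x ∈ T, 2 * ε * fcut c₀ ((|jump u x| - 5*δ)/2)
        ≤ ∑ x ∈ T, ∫ y in B x, fcut c₀ (ε * avgAbs a b ε g' y) :=
          Finset.sum_le_sum (fun x hx => (hBprop x hx).2)
      _ = ∫ y in ⋃ x ∈ T, B x, fcut c₀ (ε * avgAbs a b ε g' y) :=
          (MeasureTheory.integral_biUnion_finset T (fun x _ => hBmeas x) hdisj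
            (fun x hx => hfA_int.mono_set (hBsubA x hx))).symm
      _ ≤ ∫ y in A, fcut c₀ (ε * avgAbs a b ε g' y) := by
          apply MeasureTheory.setIntegral_mono_set hfA_int
            (Filter.Eventually.of_forall fun y =>
              fcut_nonneg hc₀.le (mul_nonneg hεpos.le (avgAbs_nonneg y)))
          apply Filter.Eventually.of_forall
          intro t ht
          obtain ⟨x, hx, hxt⟩ := Set.mem_iUnion₂.1 ht
          exact hBsubA x hx hxt
  -- conclusion
  have hfinal1 : 2 * ∑ x ∈ T, fcut c₀ ((|jump u x| - 5*δ)/2) ≤ L.toReal + δ := by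
    have hεne : ε ≠ 0 := hεpos.ne'
    have h1 : ∑ x ∈ T, 2 * ε * fcut c₀ ((|jump u x| - 5*δ)/2)
        = ε * (2 * ∑ x ∈ T, fcut c₀ ((|jump u x| - 5*δ)/2)) := by
      rw [Finset.mul_sum, Finset.mul_sum]
      apply Finset.sum_congr rfl
      intro x _
      ring
    have h2 := le_trans (le_of_eq h1.symm) hsum
    calc 2 * ∑ x ∈ T, fcut c₀ ((|jump u x| - 5*δ)/2)
        = (1/ε) * (ε * (2 * ∑ x ∈ T, fcut c₀ ((|jump u x| - 5*δ)/2))) := by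
          rw [← mul_assoc, one_div, inv_mul_cancel₀ hεne, one_mul]
      _ ≤ (1/ε) * ∫ y in A, fcut c₀ (ε * avgAbs a b ε g' y) := by
          apply mul_le_mul_of_nonneg_left h2 (by positivity)
      _ ≤ L.toReal + δ := hΦb
  have hfinal2 : ∀ x ∈ T, fcut c₀ (|jump u x| / 2) ≤
      fcut c₀ ((|jump u x| - 5*δ)/2) + c₀ * (5*δ/2) := by
    intro x _
    have := fcut_lip (c₀ := c₀) (s := |jump u x| / 2) (d := 5*δ/2) hc₀.le (by linarith)
    have heq : |jump u x| / 2 - 5*δ/2 = (|jump u x| - 5*δ)/2 := by ring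
    rw [heq] at this
    linarith
  calc 2 * ∑ x ∈ T, fcut c₀ (|jump u x| / 2)
      ≤ 2 * ∑ x ∈ T, (fcut c₀ ((|jump u x| - 5*δ)/2) + c₀ * (5*δ/2)) := by
        have := Finset.sum_le_sum hfinal2
        linarith
    _ = 2 * ∑ x ∈ T, fcut c₀ ((|jump u x| - 5*δ)/2) + T.card * (5 * c₀ * δ) := by
        rw [Finset.sum_add_distrib, Finset.sum_const, nsmul_eq_mul]
        ring
    _ ≤ (L.toReal + δ) + T.card * (5 * c₀ * δ) := by linarith [hfinal1]
    _ ≤ L.toReal + (1 + 5 * c₀ * T.card) * δ := by ring_nf; nlinarith [Nat.cast_nonneg (α := ℝ) T.card]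

end
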